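/- For every n ≥ 2, there exists a finite symmetric subset A of ℤⁿ containing 0 and generating ℤⁿ such that A ≠ (K − K) ∩ ℤⁿ for every compact K ⊆ ℝⁿ with K + ℤⁿ = ℝⁿ. -/

import Mathlib

open Pointwise

/-- The integer vector `z ∈ ℤⁿ` viewed as a point of `ℝⁿ`. -/
noncomputable def intVec (n : ℕ) (z : Fin n → ℤ) : EuclideanSpace ℝ (Fin n) :=
  (WithLp.equiv 2 (Fin n → ℝ)).symm (fun i => (z i : ℝ))

namespace HDAux
def Nmem (d : ℤ × ℤ) : Prop :=
  d = 0 ∨ d = (1,0) ∨ d = (-1,0) ∨ d = (0,1) ∨ d = (0,-1)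

lemma Nmem_iff (u1 u2 : ℤ) : Nmem (u1, u2) ↔
    (u1 = 0 ∧ u2 = 0) ∨ (u1 = 1 ∧ u2 = 0) ∨ (u1 = -1 ∧ u2 = 0)
    ∨ (u1 = 0 ∧ u2 = 1) ∨ (u1 = 0 ∧ u2 = -1) := by
  simp [Nmem, Prod.ext_iff]

lemma Nmem_neg {u : ℤ × ℤ} (h : Nmem u) : Nmem (-u) := by
  obtain ⟨u1,u2⟩ := u
  simp only [Prod.neg_mk, Nmem_iff] at *; omega

def cr (x y : ℤ × ℤ) : ℤ :=
  (if x.2 = y.2 ∧ 1 ≤ x.2 ∧ x.1 = 0 ∧ y.1 = 1 then 1 else 0)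
  - (if x.2 = y.2 ∧ 1 ≤ x.2 ∧ x.1 = 1 ∧ y.1 = 0 then 1 else 0)

lemma cr_self (x : ℤ × ℤ) : cr x x = 0 := by
  unfold cr; split_ifs <;> omega

lemma cr_add_rev (x y : ℤ × ℤ) : cr x y + cr y x = 0 := by
  unfold cr; split_ifs <;> omega

lemma decomp {u v : ℤ × ℤ} (hu : Nmem u) (hv : Nmem v) (hs : Nmem (u + v))
    (hne : u + v ≠ 0) : u = 0 ∨ v = 0 := by
  obtain ⟨u1,u2⟩ := u; obtain ⟨v1,v2⟩ := v
  simp only [Prod.mk_add_mk, Nmem_iff, ne_eq, Prod.mk_eq_zero] at hu hv hs hne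
  have : (u1 = 0 ∧ u2 = 0) ∨ (v1 = 0 ∧ v2 = 0) := by omega
  rcases this with h|h
  · exact Or.inl (by rw [Prod.mk_eq_zero]; exact h)
  · exact Or.inr (by rw [Prod.mk_eq_zero]; exact h)

lemma cell {a b d e : ℤ × ℤ}
    (h1 : Nmem (b - a)) (h2 : Nmem (d - b)) (h3 : Nmem (e - d))
    (h4 : Nmem (a - e)) (h5 : Nmem (d - a)) :
    cr a b + cr b d - cr e d - cr a e = 0 := by
  have key : cr a b + cr b d + cr d e + cr e a = 0 := by
    by_cases hda : d = a
    · rw [hda]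
      linarith [cr_add_rev a b, cr_add_rev a e, cr_self a]
    · have hda' : d - a ≠ 0 := fun h => hda (sub_eq_zero.mp h)
      have hb : b - a = 0 ∨ d - b = 0 := by
        have hcom : (b - a) + (d - b) = d - a := by ring
        have := decomp h1 h2 (by rw [hcom]; exact h5) (by rw [hcom]; exact hda')
        tauto
      have he : e - d = 0 ∨ a - e = 0 := by
        have hcom : (e - d) + (a - e) = -(d - a) := by ring
        refine decomp h3 h4 (by rw [hcom]; exact Nmem_neg h5) ?_
        rw [hcom]; exact fun hzz => hda' (neg_eq_zero.mp hzz)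
      have hb' : b = a ∨ b = d := by
        rcases hb with h|h
        · exact Or.inl (sub_eq_zero.mp h)
        · exact Or.inr (sub_eq_zero.mp h).symm
      have he' : e = d ∨ e = a := by
        rcases he with h|h
        · exact Or.inl (sub_eq_zero.mp h)
        · exact Or.inr (sub_eq_zero.mp h).symm
      rcases hb' with hb'|hb' <;> rcases he' with he'|he' <;> rw [hb', he'] <;>
        linarith [cr_add_rev a b, cr_add_rev a d, cr_add_rev a e, cr_add_rev b d,
          cr_add_rev b e, cr_add_rev d e, cr_self a, cr_self b, cr_self d, cr_self e]
  linarith [cr_add_rev d e, cr_add_rev e a, cr_add_rev e d, cr_add_rev a e]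
lemma phi_def : True := trivial

def phi (x : ℤ × ℤ) : ℤ := if 1 ≤ x.1 then 1 else 0

lemma cr_zero_of_low {x y : ℤ × ℤ} (h : x.2 ≤ 0) : cr x y = 0 := by
  unfold cr; split_ifs <;> omega

lemma cr_zero_of_left {x y : ℤ × ℤ} (hx : x.1 ≤ 0) (hy : y.1 ≤ 0) : cr x y = 0 := by
  unfold cr; split_ifs <;> omega

lemma cr_zero_of_right {x y : ℤ × ℤ} (hx : 2 ≤ x.1) : cr x y = 0 := by
  unfold cr; split_ifs <;> omega

lemma cr_step_phi {x y : ℤ × ℤ} (h : Nmem (y - x)) (hx : 1 ≤ x.2) (hy : 1 ≤ y.2) :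
    cr x y = phi y - phi x := by
  obtain ⟨x1, x2⟩ := x; obtain ⟨y1, y2⟩ := y
  simp only [Prod.mk_sub_mk, Nmem_iff] at h
  unfold cr phi; split_ifs <;> omega

theorem no_grid_map (m : ℕ) (V : ℕ → ℕ → ℤ × ℤ)
    (hadj : ∀ i j i' j' : ℕ, i' ≤ i + 1 → i ≤ i' + 1 → j' ≤ j + 1 → j ≤ j' + 1 →
      Nmem (V i' j' - V i j))
    (htop : ∀ i, 1 ≤ (V i m).2)
    (hbot : ∀ i, (V i 0).2 ≤ 0)
    (hright : ∀ j, 2 ≤ (V m j).1)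
    (hleft : ∀ j, (V 0 j).1 ≤ 0) : False := by
  set H : ℕ → ℕ → ℤ := fun i j => cr (V i j) (V (i+1) j) with hH
  set Vv : ℕ → ℕ → ℤ := fun i j => cr (V i j) (V i (j+1)) with hVv
  have hcell : ∀ i j : ℕ, (H i j - H i (j+1)) + (Vv (i+1) j - Vv i j) = 0 := by
    intro i j
    have := cell (a := V i j) (b := V (i+1) j) (d := V (i+1) (j+1)) (e := V i (j+1))
      (hadj i j (i+1) j (by omega) (by omega) (by omega) (by omega))
      (hadj (i+1) j (i+1) (j+1) (by omega) (by omega) (by omega) (by omega))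
      (hadj (i+1) (j+1) i (j+1) (by omega) (by omega) (by omega) (by omega))
      (hadj i (j+1) i j (by omega) (by omega) (by omega) (by omega))
      (hadj i j (i+1) (j+1) (by omega) (by omega) (by omega) (by omega))
    simp only [hH, hVv]
    linarith [this]
  have hsum0 : (0:ℤ) = (∑ i ∈ Finset.range m, (H i 0 - H i m))
        + (∑ j ∈ Finset.range m, (Vv m j - Vv 0 j)) := by
    have h1 : (0:ℤ) = ∑ i ∈ Finset.range m, ∑ j ∈ Finset.range m,
        ((H i j - H i (j+1)) + (Vv (i+1) j - Vv i j)) := by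
      rw [Finset.sum_eq_zero]; intro i _
      rw [Finset.sum_eq_zero]; intro j _
      exact hcell i j
    rw [h1]
    have h2 : ∀ i : ℕ, ∑ j ∈ Finset.range m,
        ((H i j - H i (j+1)) + (Vv (i+1) j - Vv i j))
        = (∑ j ∈ Finset.range m, (H i j - H i (j+1)))
          + (∑ j ∈ Finset.range m, (Vv (i+1) j - Vv i j)) := fun i =>
      Finset.sum_add_distrib
    calc ∑ i ∈ Finset.range m, ∑ j ∈ Finset.range m,
        ((H i j - H i (j+1)) + (Vv (i+1) j - Vv i j))
        = (∑ i ∈ Finset.range m, ∑ j ∈ Finset.range m, (H i j - H i (j+1)))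
          + (∑ i ∈ Finset.range m, ∑ j ∈ Finset.range m, (Vv (i+1) j - Vv i j)) := by
          rw [← Finset.sum_add_distrib]
          exact Finset.sum_congr rfl (fun i _ => h2 i)
      _ = (∑ i ∈ Finset.range m, (H i 0 - H i m))
          + (∑ j ∈ Finset.range m, (Vv m j - Vv 0 j)) := by
          congr 1
          · exact Finset.sum_congr rfl (fun i _ =>
              Finset.sum_range_sub' (fun j => H i j) m)
          · rw [Finset.sum_comm]
            exact Finset.sum_congr rfl (fun j _ =>
              Finset.sum_range_sub (fun i => Vv i j) m)
  have hb : ∀ i, H i 0 = 0 := fun i => cr_zero_of_low (hbot i)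
  have hr : ∀ j, Vv m j = 0 := fun j => cr_zero_of_right (hright j)
  have hl : ∀ j, Vv 0 j = 0 := fun j => cr_zero_of_left (hleft j) (hleft (j+1))
  have ht : (∑ i ∈ Finset.range m, H i m) = phi (V m m) - phi (V 0 m) := by
    have hstep : ∀ i, H i m = phi (V (i+1) m) - phi (V i m) := fun i =>
      cr_step_phi (hadj i m (i+1) m (by omega) (by omega) (by omega) (by omega))
        (htop i) (htop (i+1))
    calc (∑ i ∈ Finset.range m, H i m)
        = ∑ i ∈ Finset.range m, (phi (V (i+1) m) - phi (V i m)) :=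
          Finset.sum_congr rfl (fun i _ => hstep i)
      _ = phi (V m m) - phi (V 0 m) := Finset.sum_range_sub (fun i => phi (V i m)) m
  have hpmm : phi (V m m) = 1 := by unfold phi; have := hright m; split_ifs <;> omega
  have hp0m : phi (V 0 m) = 0 := by unfold phi; have := hleft m; split_ifs <;> omega
  have e1 : (∑ i ∈ Finset.range m, (H i 0 - H i m)) = -1 := by
    have : ∀ i ∈ Finset.range m, H i 0 - H i m = 0 - H i m := fun i _ => by rw [hb i]
    rw [Finset.sum_congr rfl this, Finset.sum_sub_distrib]
    rw [Finset.sum_const, ht, hpmm, hp0m]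
    simp
  have e2 : (∑ j ∈ Finset.range m, (Vv m j - Vv 0 j)) = 0 := by
    apply Finset.sum_eq_zero; intro j _; rw [hr j, hl j]; ring
  rw [e1, e2] at hsum0
  omega

end HDAux

namespace HDAux

open Metric Pointwise

lemma coord_abs_le {n : ℕ} (x : EuclideanSpace ℝ (Fin n)) (i : Fin n) : |x i| ≤ ‖x‖ := by
  rw [EuclideanSpace.norm_eq]
  calc |x i| = Real.sqrt (‖x i‖ ^ 2) := by
        rw [Real.norm_eq_abs, Real.sqrt_sq_eq_abs, abs_abs]
    _ ≤ Real.sqrt (∑ j, ‖x j‖ ^ 2) := Real.sqrt_le_sqrt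
        (Finset.single_le_sum (fun j _ => sq_nonneg ‖x j‖) (Finset.mem_univ i))

lemma intVec_apply {n : ℕ} (z : Fin n → ℤ) (i : Fin n) : intVec n z i = (z i : ℝ) := rfl

end HDAux

open HDAux Metric Pointwise

theorem higher_dimensional_obstruction (n : ℕ) (hn : 2 ≤ n) :
    ∃ A : Set (Fin n → ℤ), A.Finite ∧ -A = A ∧ 0 ∈ A ∧
      AddSubgroup.closure A = ⊤ ∧
      ∀ K : Set (EuclideanSpace ℝ (Fin n)), IsCompact K →
        (∀ x : EuclideanSpace ℝ (Fin n), ∃ y ∈ K, ∃ z : Fin n → ℤ,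
          x = y + intVec n z) →
        ¬ (∀ z : Fin n → ℤ, z ∈ A ↔ intVec n z ∈ K - K) := by
  classical
  obtain ⟨nn, rfl⟩ : ∃ m, n = m + 2 := ⟨n - 2, by omega⟩
  clear hn
  have h01 : (0 : Fin (nn + 2)) ≠ 1 := Fin.zero_ne_one
  set A : Set (Fin (nn + 2) → ℤ) := {z | Nmem (z 0, z 1) ∧ ∀ i, |z i| ≤ 1} with hAdef
  have memA : ∀ z : Fin (nn+2) → ℤ, z ∈ A ↔ (Nmem (z 0, z 1) ∧ ∀ i, |z i| ≤ 1) := by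
    intro z; rw [hAdef]; rfl
  refine ⟨A, ?_, ?_, ?_, ?_, ?_⟩
  · -- Finite
    apply Set.Finite.subset
      (Set.Finite.pi (fun _ : Fin (nn + 2) => Set.finite_Icc (-1 : ℤ) 1))
    intro z hz
    rw [memA] at hz
    intro i _
    exact Set.mem_Icc.mpr (abs_le.mp (hz.2 i))
  · -- symmetric
    ext z
    rw [Set.mem_neg, memA, memA]
    constructor
    · rintro ⟨h1, h2⟩
      refine ⟨?_, fun i => by simpa using h2 i⟩
      have := Nmem_neg h1
      simpa using this
    · rintro ⟨h1, h2⟩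
      refine ⟨?_, fun i => by simpa using h2 i⟩
      have := Nmem_neg h1
      simpa using this
  · -- zero
    rw [memA]
    exact ⟨Or.inl (by simp), fun i => by simp⟩
  · -- generates
    rw [eq_top_iff]
    rintro z -
    have hrepr : z = ∑ i, Pi.single i (z i) := (Finset.univ_sum_single z).symm
    rw [hrepr]
    apply sum_mem
    intro i _
    have hone : (Pi.single i 1 : Fin (nn+2) → ℤ) ∈ A := by
      rw [memA]
      constructor
      · rcases eq_or_ne i 0 with rfl | hi0
        · rw [Pi.single_eq_same, Pi.single_eq_of_ne (Ne.symm h01)]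
          exact Or.inr (Or.inl rfl)
        · rcases eq_or_ne i 1 with rfl | hi1
          · rw [Pi.single_eq_same, Pi.single_eq_of_ne h01]
            exact Or.inr (Or.inr (Or.inr (Or.inl rfl)))
          · rw [Pi.single_eq_of_ne (Ne.symm hi0), Pi.single_eq_of_ne (Ne.symm hi1)]
            exact Or.inl rfl
      · intro j
        rcases eq_or_ne j i with rfl | hj
        · rw [Pi.single_eq_same]; norm_num
        · rw [Pi.single_eq_of_ne hj]; norm_num
    have hsm : (Pi.single i (z i) : Fin (nn+2) → ℤ) = z i • (Pi.single i 1 : Fin (nn+2) → ℤ) := by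
      ext j
      rcases eq_or_ne j i with rfl | hj
      · simp
      · simp [Pi.single_eq_of_ne hj]
    rw [hsm]
    exact zsmul_mem (AddSubgroup.subset_closure hone) _
  · -- main obstruction
    intro K hK hcov hbi
    obtain ⟨y0, hy0, z0, hz0⟩ := hcov 0
    obtain ⟨R0, hR0⟩ := hK.isBounded.exists_norm_le
    set R : ℝ := |R0| + 1 with hRdef
    have hR : ∀ y ∈ K, ‖y‖ ≤ R := fun y hy =>
      (hR0 y hy).trans (by rw [hRdef]; linarith [le_abs_self R0])
    have hRpos : (0:ℝ) < R := by rw [hRdef]; positivity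
    have hKK : IsCompact (K - K) := by
      have himg : K - K = (fun p : EuclideanSpace ℝ (Fin (nn+2)) × _ => p.1 - p.2) '' (K ×ˢ K) := by
        ext x
        simp only [Set.mem_sub, Set.mem_image, Set.mem_prod, Prod.exists]
        constructor
        · rintro ⟨a, ha, b, hb, rfl⟩; exact ⟨a, b, ⟨ha, hb⟩, rfl⟩
        · rintro ⟨a, b, ⟨ha, hb⟩, rfl⟩; exact ⟨a, ha, b, hb, rfl⟩
      rw [himg]
      exact (hK.prod hK).image (continuous_fst.sub continuous_snd)
    have hKKne : (K - K).Nonempty := ⟨y0 - y0, Set.sub_mem_sub hy0 hy0⟩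
    -- the bad set is finite
    set B : Set (Fin (nn+2) → ℤ) :=
      {z | z ∉ A ∧ infDist (intVec (nn+2) z) (K - K) ≤ 1} with hBdef
    have hBfin : B.Finite := by
      apply Set.Finite.subset
        (Set.Finite.pi (fun _ : Fin (nn + 2) =>
          Set.finite_Icc (-(⌈2 + R + R⌉)) ⌈2 + R + R⌉))
      rintro z ⟨hzA, hzd⟩
      have hlt : infDist (intVec (nn+2) z) (K - K) < 2 := lt_of_le_of_lt hzd one_lt_two
      obtain ⟨w, hw, hdw⟩ := (infDist_lt_iff hKKne).mp hlt
      obtain ⟨a, ha, b, hb, hab⟩ := Set.mem_sub.mp hw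
      have hwn : ‖w‖ ≤ R + R := by
        rw [← hab]
        exact (norm_sub_le a b).trans (add_le_add (hR a ha) (hR b hb))
      have hzn : ∀ i, |(z i : ℝ)| ≤ 2 + R + R := by
        intro i
        have h1 : |(z i : ℝ)| ≤ ‖intVec (nn+2) z‖ := by
          have := coord_abs_le (intVec (nn+2) z) i
          rw [intVec_apply] at this
          exact this
        have h2 : ‖intVec (nn+2) z‖ ≤ ‖intVec (nn+2) z - w‖ + ‖w‖ := by
          have := norm_sub_norm_le (intVec (nn+2) z) w
          linarith
        have h3 : ‖intVec (nn+2) z - w‖ = dist (intVec (nn+2) z) w := (dist_eq_norm _ _).symm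
        linarith
      intro i _
      have h4 : |(z i : ℝ)| ≤ ((⌈2 + R + R⌉ : ℤ) : ℝ) := (hzn i).trans (Int.le_ceil _)
      have h5 : |z i| ≤ ⌈2 + R + R⌉ := by exact_mod_cast h4
      exact Set.mem_Icc.mpr (abs_le.mp h5)
    -- uniform gap ε
    obtain ⟨ε, hε0, hε1, hεA⟩ : ∃ ε : ℝ, 0 < ε ∧ ε ≤ 1 ∧
        ∀ u : Fin (nn+2) → ℤ, infDist (intVec (nn+2) u) (K - K) < ε → u ∈ A := by
      rcases B.eq_empty_or_nonempty with hBe | hBne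
      · refine ⟨1, one_pos, le_refl 1, fun u hu => ?_⟩
        by_contra huA
        have : u ∈ B := ⟨huA, le_of_lt hu⟩
        rw [hBe] at this
        exact this
      · obtain ⟨zs, hzs, hmin⟩ := Set.exists_min_image B
          (fun z => infDist (intVec (nn+2) z) (K - K)) hBfin hBne
        have hnmem : intVec (nn+2) zs ∉ K - K := fun hmem => hzs.1 ((hbi zs).mpr hmem)
        have hpos : 0 < infDist (intVec (nn+2) zs) (K - K) := by
          rcases eq_or_lt_of_le (infDist_nonneg (x := intVec (nn+2) zs) (s := K - K)) with he | hl
          · exact absurd ((hKK.isClosed.mem_iff_infDist_zero hKKne).mpr he.symm) hnmem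
          · exact hl
        refine ⟨min 1 (infDist (intVec (nn+2) zs) (K - K)), lt_min one_pos hpos,
          min_le_left _ _, ?_⟩
        intro u hu
        by_contra huA
        have huB : u ∈ B := ⟨huA, le_of_lt (lt_of_lt_of_le hu (min_le_left _ _))⟩
        have h6 := hmin u huB
        have h7 := lt_of_lt_of_le hu (min_le_right _ _)
        linarith
    set δ : ℝ := ε / 4 with hδdef
    have hδ0 : 0 < δ := by rw [hδdef]; linarith
    choose Y hYK Zf hZf using hcov
    have hZcoord : ∀ (x : EuclideanSpace ℝ (Fin (nn+2))) i, ((Zf x i : ℝ)) = x i - Y x i := by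
      intro x i
      have hx := hZf x
      have happ : x i = Y x i + intVec (nn+2) (Zf x) i := by
        conv_lhs => rw [hx]
        simp
      rw [intVec_apply] at happ
      linarith
    set P : ℤ × ℤ → EuclideanSpace ℝ (Fin (nn+2)) := fun c =>
      EuclideanSpace.single 0 (δ * c.1) + EuclideanSpace.single 1 (δ * c.2) with hPdef
    have hP0 : ∀ c, P c 0 = δ * c.1 := by
      intro c
      rw [hPdef]
      simp [EuclideanSpace.single_apply, h01]
    have hP1 : ∀ c, P c 1 = δ * c.2 := by
      intro c
      rw [hPdef]
      simp [EuclideanSpace.single_apply, (Ne.symm h01)]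
    have hPsub : ∀ c c' : ℤ × ℤ, P c - P c' =
        EuclideanSpace.single (0 : Fin (nn+2)) (δ * ((c.1 : ℝ) - c'.1))
          + EuclideanSpace.single 1 (δ * ((c.2 : ℝ) - c'.2)) := by
      intro c c'
      rw [hPdef]
      ext i
      simp only [PiLp.sub_apply, PiLp.add_apply, EuclideanSpace.single_apply]
      split_ifs <;> ring
    have hPnorm : ∀ c c' : ℤ × ℤ, |c.1 - c'.1| ≤ 1 → |c.2 - c'.2| ≤ 1 →
        ‖P c - P c'‖ ≤ 2 * δ := by
      intro c c' h1 h2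
      rw [hPsub]
      refine (norm_add_le _ _).trans ?_
      rw [EuclideanSpace.norm_single, EuclideanSpace.norm_single]
      have h1' : |(c.1 : ℝ) - (c'.1 : ℝ)| ≤ 1 := by
        have : ((|c.1 - c'.1| : ℤ) : ℝ) ≤ ((1:ℤ) : ℝ) := by exact_mod_cast h1
        rw [Int.cast_abs] at this
        push_cast at this
        exact this
      have h2' : |(c.2 : ℝ) - (c'.2 : ℝ)| ≤ 1 := by
        have : ((|c.2 - c'.2| : ℤ) : ℝ) ≤ ((1:ℤ) : ℝ) := by exact_mod_cast h2
        rw [Int.cast_abs] at this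
        push_cast at this
        exact this
      rw [Real.norm_eq_abs, Real.norm_eq_abs, abs_mul, abs_mul, abs_of_pos hδ0]
      nlinarith
    have hstepA : ∀ c c' : ℤ × ℤ, |c.1 - c'.1| ≤ 1 → |c.2 - c'.2| ≤ 1 →
        (Zf (P c) - Zf (P c')) ∈ A := by
      intro c c' h1 h2
      apply hεA
      have hw : Y (P c') - Y (P c) ∈ K - K := Set.sub_mem_sub (hYK _) (hYK _)
      refine lt_of_le_of_lt (infDist_le_dist_of_mem hw) ?_
      have hdd : dist (intVec (nn+2) (Zf (P c) - Zf (P c'))) (Y (P c') - Y (P c))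
          = ‖P c - P c'‖ := by
        rw [dist_eq_norm]
        congr 1
        ext i
        simp only [PiLp.sub_apply, intVec_apply, Pi.sub_apply]
        push_cast
        rw [hZcoord, hZcoord]
        ring
      rw [hdd]
      calc ‖P c - P c'‖ ≤ 2 * δ := hPnorm c c' h1 h2
        _ < ε := by rw [hδdef]; linarith
    set Q : ℤ × ℤ → ℤ × ℤ := fun c => (Zf (P c) 0, Zf (P c) 1) with hQdef
    have hQstep : ∀ c c' : ℤ × ℤ, |c.1 - c'.1| ≤ 1 → |c.2 - c'.2| ≤ 1 →
        Nmem (Q c' - Q c) := by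
      intro c c' h1 h2
      have hA' := hstepA c' c (by rw [abs_sub_comm]; exact h1) (by rw [abs_sub_comm]; exact h2)
      rw [memA] at hA'
      have := hA'.1
      simpa [hQdef, Prod.ext_iff] using this
    have hdisp : ∀ c : ℤ × ℤ,
        |(Zf (P c) 0 : ℝ) - δ * c.1| ≤ R ∧ |(Zf (P c) 1 : ℝ) - δ * c.2| ≤ R := by
      intro c
      constructor
      · rw [hZcoord, hP0]
        have h8 : |Y (P c) 0| ≤ ‖Y (P c)‖ := coord_abs_le _ 0
        have h9 := hR _ (hYK (P c))
        rw [abs_sub_comm]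
        have : δ * c.1 - (δ * c.1 - Y (P c) 0) = Y (P c) 0 := by ring
        rw [this]
        linarith
      · rw [hZcoord, hP1]
        have h8 : |Y (P c) 1| ≤ ‖Y (P c)‖ := coord_abs_le _ 1
        have h9 := hR _ (hYK (P c))
        rw [abs_sub_comm]
        have : δ * c.2 - (δ * c.2 - Y (P c) 1) = Y (P c) 1 := by ring
        rw [this]
        linarith
    obtain ⟨M, hM⟩ := exists_nat_ge ((R + 2) / δ)
    have hMδ : R + 2 ≤ δ * M := by
      rw [div_le_iff₀ hδ0] at hM
      linarith
    refine no_grid_map (2 * M) (fun i j => Q ((i:ℤ) - M, (j:ℤ) - M)) ?_ ?_ ?_ ?_ ?_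
    · intro i j i' j' hi1 hi2 hj1 hj2
      apply hQstep
      · simp only
        rw [abs_le]
        constructor <;> push_cast <;> omega
      · simp only
        rw [abs_le]
        constructor <;> push_cast <;> omega
    · -- top
      intro i
      have hd := (hdisp ((i:ℤ) - M, ((2*M : ℕ) : ℤ) - M)).2
      have hcast : ((((2*M : ℕ) : ℤ) - M : ℤ) : ℝ) = (M : ℝ) := by push_cast; ring
      rw [hcast] at hd
      rw [abs_le] at hd
      have : (1:ℝ) ≤ ((Zf (P ((i:ℤ) - M, ((2*M : ℕ) : ℤ) - M)) 1 : ℤ) : ℝ) := by linarith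
      exact_mod_cast this
    · -- bottom
      intro i
      have hd := (hdisp ((i:ℤ) - M, ((0 : ℕ) : ℤ) - M)).2
      have hcast : ((((0 : ℕ) : ℤ) - M : ℤ) : ℝ) = -(M : ℝ) := by push_cast; ring
      rw [hcast] at hd
      rw [abs_le] at hd
      have : ((Zf (P ((i:ℤ) - M, ((0 : ℕ) : ℤ) - M)) 1 : ℤ) : ℝ) ≤ 0 := by linarith
      exact_mod_cast this
    · -- right
      intro j
      have hd := (hdisp (((2*M : ℕ) : ℤ) - M, (j:ℤ) - M)).1
      have hcast : ((((2*M : ℕ) : ℤ) - M : ℤ) : ℝ) = (M : ℝ) := by push_cast; ring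
      rw [hcast] at hd
      rw [abs_le] at hd
      have : (2:ℝ) ≤ ((Zf (P (((2*M : ℕ) : ℤ) - M, (j:ℤ) - M)) 0 : ℤ) : ℝ) := by linarith
      exact_mod_cast this
    · -- left
      intro j
      have hd := (hdisp (((0 : ℕ) : ℤ) - M, (j:ℤ) - M)).1
      have hcast : ((((0 : ℕ) : ℤ) - M : ℤ) : ℝ) = -(M : ℝ) := by push_cast; ring
      rw [hcast] at hd
      rw [abs_le] at hd
      have : ((Zf (P (((0 : ℕ) : ℤ) - M, (j:ℤ) - M)) 0 : ℤ) : ℝ) ≤ 0 := by linarith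
      exact_mod_cast this
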